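/- Let A be a real n×n matrix for which there exists a diagonal matrix S = diag(s₁,…,sₙ) with all s_i > 0 satisfying AᵀS = SA, and suppose that for every i, Σ_{j≠i} √(A_{ij}·A_{ji}) < A_{ii}. Then every complex eigenvalue of A is a positive real number. -/

import Mathlib

open Matrix Finset

/-- If `AᵀS = SA` for a positive diagonal matrix `S` and the diagonal of `A` strictly
dominates in the sense `Σ_{j ≠ i} √(A i j * A j i) < A i i` for every `i`, then every
complex eigenvalue of `A` is a positive real number. -/
theorem stmt_8 (n : ℕ) (A : Matrix (Fin n) (Fin n) ℝ) (s : Fin n → ℝ)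
    (hs : ∀ i, 0 < s i) (hsyl : Aᵀ * Matrix.diagonal s = Matrix.diagonal s * A)
    (hdom : ∀ i : Fin n, ∑ j ∈ Finset.univ.erase i, Real.sqrt (A i j * A j i) < A i i)
    (μ : ℂ) (hμ : (A.charpoly.map (algebraMap ℝ ℂ)).IsRoot μ) :
    μ.im = 0 ∧ 0 < μ.re := by
  -- setup
  set a : Fin n → ℝ := fun i => Real.sqrt (s i) with ha_def
  have ha : ∀ i, 0 < a i := fun i => Real.sqrt_pos.mpr (hs i)
  have ha2 : ∀ i, a i * a i = s i := fun i => Real.mul_self_sqrt (hs i).le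
  have hAsym : ∀ i j, A j i * s j = s i * A i j := by
    intro i j
    have := (Matrix.ext_iff.2 hsyl) i j
    simpa [Matrix.mul_diagonal, Matrix.diagonal_mul, Matrix.transpose_apply] using this
  set B : Matrix (Fin n) (Fin n) ℝ := Matrix.of fun i j => a i * A i j / a j with hB_def
  have hBsym : ∀ i j, B i j = B j i := by
    intro i j
    show a i * A i j / a j = a j * A j i / a i
    have h1 := hAsym i j
    rw [← ha2 i, ← ha2 j] at h1
    field_simp [(ha i).ne', (ha j).ne']
    nlinarith [h1]
  have hBdiag : ∀ i, B i i = A i i := by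
    intro i
    show a i * A i i / a i = A i i
    rw [mul_comm, mul_div_assoc, div_self (ha i).ne', mul_one]
  have hBsq : ∀ i j, B i j * B i j = A i j * A j i := by
    intro i j
    have h := hBsym i j
    calc B i j * B i j = B i j * B j i := by rw [← h]
      _ = (a i * A i j / a j) * (a j * A j i / a i) := rfl
      _ = A i j * A j i := by field_simp [(ha i).ne', (ha j).ne']
  -- eigenvector of Ac
  set Ac : Matrix (Fin n) (Fin n) ℂ := A.map (algebraMap ℝ ℂ) with hAc_def
  rw [← Matrix.charpoly_map] at hμ
  have hdet : (Matrix.scalar (Fin n) μ - Ac).det = 0 := by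
    have h := hμ
    rw [Polynomial.IsRoot, Matrix.charpoly, eval_det, matPolyEquiv_charmatrix] at h
    simpa [hAc_def] using h
  obtain ⟨v, hv0, hveq⟩ := (Matrix.exists_mulVec_eq_zero_iff).2 hdet
  have hAv : Ac *ᵥ v = μ • v := by
    rw [Matrix.sub_mulVec, sub_eq_zero] at hveq
    rw [← hveq, Matrix.scalar_apply, Matrix.diagonal_const_mulVec]
  -- eigenvector of Bc
  set Bc : Matrix (Fin n) (Fin n) ℂ := B.map (algebraMap ℝ ℂ) with hBc_def
  set w : Fin n → ℂ := fun i => (a i : ℂ) * v i with hw_def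
  have hw0 : w ≠ 0 := by
    obtain ⟨i, hi⟩ := Function.ne_iff.mp hv0
    exact Function.ne_iff.mpr ⟨i, by
      simp only [hw_def, Pi.zero_apply] at hi ⊢
      exact mul_ne_zero (by exact_mod_cast (ha i).ne') hi⟩
  have hBw : ∀ i, (Bc *ᵥ w) i = μ * w i := by
    intro i
    have hAvi : ∑ j, (A i j : ℂ) * v j = μ * v i := by
      have := congrFun hAv i
      simpa [Matrix.mulVec, dotProduct, hAc_def, Matrix.map_apply] using this
    calc (Bc *ᵥ w) i = ∑ j, ((a i * A i j / a j : ℝ) : ℂ) * ((a j : ℂ) * v j) := by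
          simp [Matrix.mulVec, dotProduct, hBc_def, hB_def, hw_def, Matrix.map_apply]
      _ = ∑ j, (a i : ℂ) * ((A i j : ℂ) * v j) := by
          refine Finset.sum_congr rfl fun j _ => ?_
          have haj : (a j : ℂ) ≠ 0 := by exact_mod_cast (ha j).ne'
          push_cast
          field_simp
      _ = (a i : ℂ) * (μ * v i) := by rw [← Finset.mul_sum, hAvi]
      _ = μ * w i := by simp [hw_def]; ring
  -- realness
  have hBcreal : ∀ i j, (starRingEnd ℂ) (Bc i j) = Bc i j := by
    intro i j; simp [hBc_def, Matrix.map_apply, Complex.conj_ofReal]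
  have hBcsym : ∀ i j, Bc i j = Bc j i := by
    intro i j; simp [hBc_def, Matrix.map_apply, hBsym i j]
  set q : ℂ := ∑ i, (starRingEnd ℂ) (w i) * w i with hq_def
  have hsum : ∑ i, ∑ j, (starRingEnd ℂ) (w i) * (Bc i j * w j) = μ * q := by
    rw [hq_def, Finset.mul_sum]
    refine Finset.sum_congr rfl fun i _ => ?_
    rw [← Finset.mul_sum]
    have : ∑ j, Bc i j * w j = μ * w i := by
      rw [← hBw i]; simp [Matrix.mulVec, dotProduct]
    rw [this]; ring
  have hqr : q = ((∑ i, Complex.normSq (w i) : ℝ) : ℂ) := by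
    rw [hq_def]; push_cast
    exact Finset.sum_congr rfl fun i _ => by rw [mul_comm, Complex.mul_conj]
  have hqc : (starRingEnd ℂ) q = q := by rw [hqr]; exact Complex.conj_ofReal _
  have hconj : (starRingEnd ℂ) μ * q = μ * q := by
    have h2 := congrArg (starRingEnd ℂ) hsum
    simp only [map_sum, _root_.map_mul, hBcreal, Complex.conj_conj, hqc] at h2
    rw [← h2, ← hsum, Finset.sum_comm]
    refine Finset.sum_congr rfl fun i _ => Finset.sum_congr rfl fun j _ => ?_
    rw [hBcsym j i]; ring
  have hq0 : q ≠ 0 := by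
    rw [hqr]
    obtain ⟨i, hi⟩ := Function.ne_iff.mp hw0
    have : 0 < ∑ i, Complex.normSq (w i) := by
      refine Finset.sum_pos' (fun j _ => Complex.normSq_nonneg _) ⟨i, Finset.mem_univ i, ?_⟩
      exact Complex.normSq_pos.mpr hi
    exact_mod_cast this.ne'
  have him : μ.im = 0 := by
    have := mul_right_cancel₀ hq0 hconj
    exact Complex.conj_eq_iff_im.mp this
  refine ⟨him, ?_⟩
  -- Gershgorin
  have heig : Module.End.HasEigenvalue (Matrix.toLin' Bc) μ := by
    refine Module.End.hasEigenvalue_of_hasEigenvector ⟨?_, hw0⟩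
    rw [Module.End.mem_eigenspace_iff, Matrix.toLin'_apply]
    ext i
    simp [hBw i]
  obtain ⟨k, hk⟩ := eigenvalue_mem_ball heig
  rw [Metric.mem_closedBall, Complex.dist_eq] at hk
  have hBck : Bc k k = ((A k k : ℝ) : ℂ) := by
    simp [hBc_def, Matrix.map_apply, hBdiag k]
  have hnorm : ∀ j, j ≠ k → ‖Bc k j‖ = Real.sqrt (A k j * A j k) := by
    intro j hj
    have : ‖Bc k j‖ = |B k j| := by
      simp [hBc_def, Matrix.map_apply, Complex.norm_real]
    rw [this, ← Real.sqrt_mul_self_eq_abs, hBsq k j]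
  have hrad : ∑ j ∈ Finset.univ.erase k, ‖Bc k j‖ = ∑ j ∈ Finset.univ.erase k, Real.sqrt (A k j * A j k) := by
    refine Finset.sum_congr rfl fun j hj => ?_
    rw [hnorm j (Finset.ne_of_mem_erase hj)]
  rw [hrad, hBck] at hk
  have hlt : ‖μ - ((A k k : ℝ) : ℂ)‖ < A k k := lt_of_le_of_lt hk (hdom k)
  have hμre : μ = ((μ.re : ℝ) : ℂ) := by
    rw [Complex.ext_iff]; simp [him]
  rw [hμre] at hlt
  rw [← Complex.ofReal_sub, Complex.norm_real, Real.norm_eq_abs] at hlt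
  have := abs_lt.mp hlt
  linarith [this.1]
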